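/- Let Σ = {a < b < c} be the ternary ordered alphabet and w ∈ Σ*. Then the inverse of the Parikh matrix of the circular word [w] equals the alternate Parikh matrix of the circular word [mi(w)]: [Ψ_Σ([w])]^{−1} = \overline{Ψ}_Σ([mi(w)]). -/

import Mathlib

/-- The number of occurrences of `v` as a scattered subword (subsequence) of `w`:
the number of strictly increasing sequences of positions in `w` spelling out `v`. -/
def subwordCount {α : Type*} [DecidableEq α] (w v : List α) : ℕ :=
  w.sublists.count v

/-- The conjugacy class (circular word) `[w]` of `w`: the set of all cyclic shifts of `w`. -/
def conjClass {α : Type*} [DecidableEq α] (w : List α) : Finset (List α) :=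
  insert w ((Finset.range w.length).image w.rotate)

/-- The average subword count of `v` in the circular word `[w]`:
`|[w]|_v = (1/|[w]|) ∑_{u ∈ [w]} |u|_v`. -/
def circCount {α : Type*} [DecidableEq α] (w v : List α) : ℚ :=
  (∑ u ∈ conjClass w, (subwordCount u v : ℚ)) / ((conjClass w).card : ℚ)

/-- The Parikh matrix of the letter `q` of the ordered alphabet `Fin s`:
the identity matrix with an extra `1` in entry `(q, q+1)`. -/
def parikhLetter {s : ℕ} (q : Fin s) : Matrix (Fin (s + 1)) (Fin (s + 1)) ℚ :=
  1 + Matrix.single q.castSucc q.succ 1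

/-- The Parikh matrix mapping over the ordered alphabet `Fin s` (a monoid morphism). -/
def parikhMatrix {s : ℕ} (w : List (Fin s)) : Matrix (Fin (s + 1)) (Fin (s + 1)) ℚ :=
  (w.map parikhLetter).prod

/-- The Parikh matrix of the circular word `[w]`:
`Ψ([w]) = (1/|[w]|) ∑_{u ∈ [w]} Ψ(u)`. -/
def circParikh {s : ℕ} (w : List (Fin s)) : Matrix (Fin (s + 1)) (Fin (s + 1)) ℚ :=
  (((conjClass w).card : ℚ))⁻¹ • ∑ u ∈ conjClass w, parikhMatrix u

/-- The alternate matrix: `(i,j)` entry is `(-1)^(i+j)` times the `(i,j)` entry of `A`. -/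
def altMatrix {n : ℕ} (A : Matrix (Fin n) (Fin n) ℚ) : Matrix (Fin n) (Fin n) ℚ :=
  Matrix.of fun i j => (-1 : ℚ) ^ (i.val + j.val) * A i j

/-- The word `a_i a_{i+1} ⋯ a_j` over the ordered alphabet `Fin s`. -/
def segWord {s : ℕ} (i j : Fin s) : List (Fin s) :=
  (List.range (j.val - i.val + 1)).attach.map fun t =>
    ⟨i.val + t.1, by
      have ht := List.mem_range.mp t.2
      have hi := i.isLt
      have hj := j.isLt
      omega⟩

lemma altMatrix_mul {n : ℕ} (A B : Matrix (Fin n) (Fin n) ℚ) :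
    altMatrix (A * B) = altMatrix A * altMatrix B := by
  ext i j
  simp only [altMatrix, Matrix.mul_apply, Matrix.of_apply, Finset.mul_sum]
  refine Finset.sum_congr rfl fun k _ => ?_
  have h : ((-1:ℚ))^(i.val+k.val) * (-1)^(k.val+j.val) = (-1)^(i.val+j.val) := by
    rw [← pow_add]
    have h2 : i.val+k.val+(k.val+j.val) = 2*k.val + (i.val+j.val) := by ring
    rw [h2, pow_add, pow_mul]
    norm_num
  rw [← h]; ring

lemma altMatrix_one {n : ℕ} : altMatrix (1 : Matrix (Fin n) (Fin n) ℚ) = 1 := by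
  ext i j
  by_cases h : i = j
  · subst h
    simp [altMatrix, Matrix.one_apply, ← two_mul, pow_mul]
  · simp [altMatrix, Matrix.one_apply, h]

lemma altMatrix_smul {n : ℕ} (c : ℚ) (A : Matrix (Fin n) (Fin n) ℚ) :
    altMatrix (c • A) = c • altMatrix A := by
  ext i j
  simp [altMatrix]
  ring

lemma altMatrix_sum {n : ℕ} {ι : Type*} (S : Finset ι) (f : ι → Matrix (Fin n) (Fin n) ℚ) :
    altMatrix (∑ u ∈ S, f u) = ∑ u ∈ S, altMatrix (f u) := by
  ext i j
  simp [altMatrix, Finset.sum_apply, Finset.mul_sum, Matrix.sum_apply]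

lemma parikh_nil {s : ℕ} : parikhMatrix ([] : List (Fin s)) = 1 := by simp [parikhMatrix]

lemma parikh_cons {s : ℕ} (q : Fin s) (t : List (Fin s)) :
    parikhMatrix (q :: t) = parikhLetter q * parikhMatrix t := by simp [parikhMatrix]

lemma parikh_append {s : ℕ} (x y : List (Fin s)) :
    parikhMatrix (x ++ y) = parikhMatrix x * parikhMatrix y := by
  simp [parikhMatrix]

lemma parikh_singleton {s : ℕ} (q : Fin s) : parikhMatrix [q] = parikhLetter q := by
  simp [parikhMatrix]

lemma succ_ne_castSucc {s : ℕ} (q : Fin s) : q.succ ≠ q.castSucc := by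
  simp [Fin.ext_iff]

lemma altMatrix_letter {s : ℕ} (q : Fin s) :
    altMatrix (parikhLetter q) = 1 - Matrix.single q.castSucc q.succ 1 := by
  ext i j
  by_cases h : i = j
  · subst h
    have hne : ¬ (q.castSucc = i ∧ q.succ = i) := by
      rintro ⟨h1, h2⟩; exact succ_ne_castSucc q (h2.trans h1.symm)
    simp only [altMatrix, parikhLetter, Matrix.of_apply, Matrix.add_apply, Matrix.sub_apply,
      Matrix.one_apply_eq, Matrix.single, Matrix.of_apply, if_neg hne]
    simp [← two_mul, pow_mul]
  · simp only [altMatrix, parikhLetter, Matrix.of_apply, Matrix.add_apply, Matrix.sub_apply,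
      Matrix.one_apply_ne h, Matrix.single, Matrix.of_apply, zero_add]
    by_cases h2 : q.castSucc = i ∧ q.succ = j
    · obtain ⟨h3, h4⟩ := h2
      subst h3; subst h4
      simp only [eq_self_iff_true, and_self, if_true, Fin.coe_castSucc, Fin.val_succ]
      rw [show (q.val + (q.val + 1)) = 2*q.val + 1 by ring, pow_add, pow_mul]
      norm_num
    · simp [h2]

lemma letter_alt_inv {s : ℕ} (q : Fin s) :
    parikhLetter q * altMatrix (parikhLetter q) = 1 := by
  rw [altMatrix_letter, parikhLetter]
  have h0 : Matrix.single q.castSucc q.succ (1:ℚ) *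
      Matrix.single q.castSucc q.succ (1:ℚ) = 0 :=
    Matrix.single_mul_single_of_ne _ _ _ _ (succ_ne_castSucc q) _
  rw [mul_sub, mul_one, add_mul, one_mul, h0]
  abel

lemma word_alt_inv {s : ℕ} (u : List (Fin s)) :
    parikhMatrix u * altMatrix (parikhMatrix u.reverse) = 1 := by
  induction u with
  | nil => simp [parikh_nil, altMatrix_one]
  | cons q t ih =>
    rw [List.reverse_cons, parikh_append, parikh_singleton, altMatrix_mul, parikh_cons,
      mul_assoc, ← mul_assoc (parikhMatrix t), ih, one_mul, letter_alt_inv]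

lemma parikh_lower_diag {s : ℕ} (u : List (Fin s)) :
    ∀ (i j : Fin (s+1)), j ≤ i → parikhMatrix u i j = if i = j then 1 else 0 := by
  induction u with
  | nil => intro i j _; simp [parikh_nil, Matrix.one_apply]
  | cons q t ih =>
    intro i j hji
    rw [parikh_cons, parikhLetter, add_mul, one_mul, Matrix.add_apply]
    by_cases hi : i = q.castSucc
    · subst hi
      rw [Matrix.single_mul_apply_same, one_mul]
      have hj : j ≤ q.castSucc := hji
      have : parikhMatrix t q.succ j = 0 := by
        rw [ih q.succ j (le_trans hj (le_of_lt (Fin.castSucc_lt_succ (i := q))))]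
        have : q.succ ≠ j := by
          intro h
          exact absurd (h ▸ hj) (not_le.mpr (Fin.castSucc_lt_succ (i := q)))
        simp [this]
      rw [this, add_zero, ih _ _ hji]
    · rw [Matrix.single_mul_apply_of_ne _ _ _ _ _ hi, add_zero, ih _ _ hji]

lemma parikh_diag {s : ℕ} (u : List (Fin s)) (i : Fin (s+1)) : parikhMatrix u i i = 1 := by
  rw [parikh_lower_diag u i i le_rfl, if_pos rfl]

lemma parikh_lower {s : ℕ} (u : List (Fin s)) (i j : Fin (s+1)) (h : j < i) :
    parikhMatrix u i j = 0 := by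
  rw [parikh_lower_diag u i j h.le, if_neg (ne_of_gt h)]

lemma parikh_super {s : ℕ} (u : List (Fin s)) (q : Fin s) :
    parikhMatrix u q.castSucc q.succ = (u.count q : ℚ) := by
  induction u with
  | nil => simp [parikh_nil, Matrix.one_apply, Fin.ext_iff]
  | cons r t ih =>
    rw [parikh_cons, parikhLetter, add_mul, one_mul, Matrix.add_apply, ih]
    by_cases hqr : q = r
    · subst hqr
      rw [Matrix.single_mul_apply_same, one_mul, parikh_diag]
      simp [List.count_cons]
    · have h1 : q.castSucc ≠ r.castSucc := fun h => hqr (Fin.castSucc_injective _ h)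
      rw [Matrix.single_mul_apply_of_ne _ _ _ _ _ h1, add_zero]
      simp [List.count_cons, Ne.symm hqr]

lemma mem_conjClass {α : Type*} [DecidableEq α] {w u : List α} :
    u ∈ conjClass w ↔ w ~r u := by
  constructor
  · intro h
    rcases Finset.mem_insert.mp h with h | h
    · exact h ▸ List.IsRotated.refl w
    · obtain ⟨k, _, hk⟩ := Finset.mem_image.mp h
      exact ⟨k, hk⟩
  · rintro hr
    obtain ⟨k, hkle, hk⟩ := List.isRotated_iff_mod.mp hr
    rcases lt_or_eq_of_le hkle with hlt | heq
    · exact Finset.mem_insert.mpr (Or.inr (Finset.mem_image.mpr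
        ⟨k, Finset.mem_range.mpr hlt, hk⟩))
    · subst heq
      rw [List.rotate_length] at hk
      exact hk ▸ Finset.mem_insert_self _ _

lemma conjClass_reverse {α : Type*} [DecidableEq α] (w : List α) :
    conjClass w.reverse = (conjClass w).image List.reverse := by
  ext u
  rw [Finset.mem_image, mem_conjClass]
  constructor
  · intro h
    exact ⟨u.reverse, mem_conjClass.mpr (by simpa using h.reverse), List.reverse_reverse u⟩
  · rintro ⟨v, hv, rfl⟩
    exact (mem_conjClass.mp hv).reverse

lemma count_conj {α : Type*} [DecidableEq α] {w u : List α} (h : u ∈ conjClass w) (q : α) :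
    u.count q = w.count q :=
  ((mem_conjClass.mp h).perm.count_eq q).symm

section Tern
variable (v : List (Fin 3))

lemma fv0 : ((0 : Fin 4) : ℕ) = 0 := rfl
lemma fv1 : ((1 : Fin 4) : ℕ) = 1 := rfl
lemma fv2 : ((2 : Fin 4) : ℕ) = 2 := rfl
lemma fv3 : ((3 : Fin 4) : ℕ) = 3 := rfl

lemma parikh01 : parikhMatrix v 0 1 = (v.count 0 : ℚ) := parikh_super v 0
lemma parikh12 : parikhMatrix v 1 2 = (v.count 1 : ℚ) := parikh_super v 1
lemma parikh23 : parikhMatrix v 2 3 = (v.count 2 : ℚ) := parikh_super v 2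

lemma alt01 : altMatrix (parikhMatrix v.reverse) 0 1 = -(v.count 0 : ℚ) := by
  simp only [altMatrix, Matrix.of_apply, fv0, fv1, parikh01, List.count_reverse]
  norm_num

lemma alt12 : altMatrix (parikhMatrix v.reverse) 1 2 = -(v.count 1 : ℚ) := by
  simp only [altMatrix, Matrix.of_apply, fv1, fv2, parikh12, List.count_reverse]
  norm_num

lemma alt23 : altMatrix (parikhMatrix v.reverse) 2 3 = -(v.count 2 : ℚ) := by
  simp only [altMatrix, Matrix.of_apply, fv2, fv3, parikh23, List.count_reverse]
  norm_num

lemma alt_lower (i j : Fin 4) (h : j < i) : altMatrix (parikhMatrix v.reverse) i j = 0 := by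
  simp [altMatrix, parikh_lower _ _ _ h]

lemma alt_diag (i : Fin 4) : altMatrix (parikhMatrix v.reverse) i i = 1 := by
  simp [altMatrix, parikh_diag, ← two_mul, pow_mul]

lemma alt02 : altMatrix (parikhMatrix v.reverse) 0 2 =
    (v.count 0 : ℚ) * (v.count 1) - parikhMatrix v 0 2 := by
  have h : ∑ j : Fin 4, parikhMatrix v 0 j * altMatrix (parikhMatrix v.reverse) j 2
      = (1 : Matrix (Fin 4) (Fin 4) ℚ) 0 2 := congrFun (congrFun (word_alt_inv v) 0) 2
  simp only [Fin.sum_univ_four] at h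
  rw [parikh_diag, parikh01, alt_lower v 3 2 (by decide), alt12, alt_diag,
    Matrix.one_apply_ne (by decide)] at h
  linarith

lemma alt13 : altMatrix (parikhMatrix v.reverse) 1 3 =
    (v.count 1 : ℚ) * (v.count 2) - parikhMatrix v 1 3 := by
  have h : ∑ j : Fin 4, parikhMatrix v 1 j * altMatrix (parikhMatrix v.reverse) j 3
      = (1 : Matrix (Fin 4) (Fin 4) ℚ) 1 3 := congrFun (congrFun (word_alt_inv v) 1) 3
  simp only [Fin.sum_univ_four] at h
  rw [parikh_diag, parikh12, parikh_lower v 1 0 (by decide), alt23, alt_diag,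
    Matrix.one_apply_ne (by decide)] at h
  linarith

lemma alt03 : altMatrix (parikhMatrix v.reverse) 0 3 =
    -parikhMatrix v 0 3 + (v.count 2 : ℚ) * parikhMatrix v 0 2
      + (v.count 0 : ℚ) * parikhMatrix v 1 3
      - (v.count 0 : ℚ) * (v.count 1) * (v.count 2) := by
  have h : ∑ j : Fin 4, parikhMatrix v 0 j * altMatrix (parikhMatrix v.reverse) j 3
      = (1 : Matrix (Fin 4) (Fin 4) ℚ) 0 3 := congrFun (congrFun (word_alt_inv v) 0) 3
  simp only [Fin.sum_univ_four] at h
  rw [parikh_diag, parikh01, alt13 v, alt23, alt_diag,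
    Matrix.one_apply_ne (by decide)] at h
  linarith

end Tern

section Key

def Dm (Cc : ℚ) (u : List (Fin 3)) : Matrix (Fin 4) (Fin 4) ℚ :=
  !![0, 0, parikhMatrix u 0 2, parikhMatrix u 0 3 - Cc * parikhMatrix u 0 2;
     0, 0, 0, parikhMatrix u 1 3;
     0, 0, 0, 0;
     0, 0, 0, 0]

lemma plow10 (v : List (Fin 3)) : parikhMatrix v 1 0 = 0 := parikh_lower v 1 0 (by decide)
lemma plow20 (v : List (Fin 3)) : parikhMatrix v 2 0 = 0 := parikh_lower v 2 0 (by decide)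
lemma plow30 (v : List (Fin 3)) : parikhMatrix v 3 0 = 0 := parikh_lower v 3 0 (by decide)
lemma plow21 (v : List (Fin 3)) : parikhMatrix v 2 1 = 0 := parikh_lower v 2 1 (by decide)
lemma plow31 (v : List (Fin 3)) : parikhMatrix v 3 1 = 0 := parikh_lower v 3 1 (by decide)
lemma plow32 (v : List (Fin 3)) : parikhMatrix v 3 2 = 0 := parikh_lower v 3 2 (by decide)
lemma alow10 (v : List (Fin 3)) : altMatrix (parikhMatrix v.reverse) 1 0 = 0 := alt_lower v 1 0 (by decide)
lemma alow20 (v : List (Fin 3)) : altMatrix (parikhMatrix v.reverse) 2 0 = 0 := alt_lower v 2 0 (by decide)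
lemma alow30 (v : List (Fin 3)) : altMatrix (parikhMatrix v.reverse) 3 0 = 0 := alt_lower v 3 0 (by decide)
lemma alow21 (v : List (Fin 3)) : altMatrix (parikhMatrix v.reverse) 2 1 = 0 := alt_lower v 2 1 (by decide)
lemma alow31 (v : List (Fin 3)) : altMatrix (parikhMatrix v.reverse) 3 1 = 0 := alt_lower v 3 1 (by decide)
lemma alow32 (v : List (Fin 3)) : altMatrix (parikhMatrix v.reverse) 3 2 = 0 := alt_lower v 3 2 (by decide)

lemma key_decomp (A B C : ℕ) (u v : List (Fin 3))
    (hu0 : u.count 0 = A) (hu1 : u.count 1 = B) (hu2 : u.count 2 = C)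
    (hv0 : v.count 0 = A) (hv1 : v.count 1 = B) (hv2 : v.count 2 = C) :
    parikhMatrix u * altMatrix (parikhMatrix v.reverse) = 1 + Dm C u - Dm C v := by
  ext i j
  fin_cases i <;> fin_cases j <;>
    simp [Matrix.mul_apply, Fin.sum_univ_four, Dm, Matrix.one_apply,
      parikh_diag, parikh01, parikh12, parikh23,
      plow10, plow20, plow30, plow21, plow31, plow32,
      alow10, alow20, alow30, alow21, alow31, alow32,
      alt_diag, alt01, alt12, alt23, alt02, alt13, alt03,
      hu0, hu1, hu2, hv0, hv1, hv2] <;>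
    ring

end Key

lemma double_sum_eq (w : List (Fin 3)) :
    (∑ u ∈ conjClass w, parikhMatrix u) *
      (∑ v ∈ conjClass w, altMatrix (parikhMatrix v.reverse)) =
      (((conjClass w).card : ℚ) * ((conjClass w).card : ℚ)) •
        (1 : Matrix (Fin 4) (Fin 4) ℚ) := by
  set n := (conjClass w).card with hn
  rw [Finset.sum_mul_sum]
  have hkey : ∀ u ∈ conjClass w, ∀ v ∈ conjClass w,
      parikhMatrix u * altMatrix (parikhMatrix v.reverse) =
        1 + Dm (w.count 2 : ℚ) u - Dm (w.count 2 : ℚ) v := by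
    intro u hu v hv
    exact key_decomp (w.count 0) (w.count 1) (w.count 2) u v
      (count_conj hu 0) (count_conj hu 1) (count_conj hu 2)
      (count_conj hv 0) (count_conj hv 1) (count_conj hv 2)
  calc ∑ u ∈ conjClass w, ∑ v ∈ conjClass w,
        parikhMatrix u * altMatrix (parikhMatrix v.reverse)
      = ∑ u ∈ conjClass w, ∑ v ∈ conjClass w,
          (1 + Dm (w.count 2 : ℚ) u - Dm (w.count 2 : ℚ) v) :=
        Finset.sum_congr rfl fun u hu => Finset.sum_congr rfl fun v hv => hkey u hu v hv
    _ = ∑ u ∈ conjClass w,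
          (n • (1 + Dm (w.count 2 : ℚ) u) - ∑ v ∈ conjClass w, Dm (w.count 2 : ℚ) v) :=
        Finset.sum_congr rfl fun u _ => by rw [Finset.sum_sub_distrib, Finset.sum_const]
    _ = n • (n • (1 : Matrix (Fin 4) (Fin 4) ℚ) + ∑ u ∈ conjClass w, Dm (w.count 2 : ℚ) u)
          - n • ∑ v ∈ conjClass w, Dm (w.count 2 : ℚ) v := by
        rw [Finset.sum_sub_distrib, Finset.sum_const, ← Finset.smul_sum,
          Finset.sum_add_distrib, Finset.sum_const]
    _ = n • (n • (1 : Matrix (Fin 4) (Fin 4) ℚ)) := by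
        rw [smul_add, add_sub_cancel_right]
    _ = ((n : ℚ) * (n : ℚ)) • (1 : Matrix (Fin 4) (Fin 4) ℚ) := by
        rw [← Nat.cast_smul_eq_nsmul ℚ n, ← Nat.cast_smul_eq_nsmul ℚ n, smul_smul]


/-- Proposition 21 (ternary case): for a word `w` over `{a < b < c} = Fin 3`, the inverse of
the Parikh matrix of the circular word `[w]` is the alternate Parikh matrix of `[mi(w)]`. -/
theorem stmt_8 (w : List (Fin 3)) :
    (circParikh w)⁻¹ = altMatrix (circParikh w.reverse) := by
  apply Matrix.inv_eq_right_inv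
  have hwC : w ∈ conjClass w := Finset.mem_insert_self _ _
  have hcard : ((conjClass w).card : ℚ) ≠ 0 :=
    Nat.cast_ne_zero.mpr (Finset.card_ne_zero_of_mem hwC)
  have hrev : circParikh w.reverse
      = ((conjClass w).card : ℚ)⁻¹ • ∑ u ∈ conjClass w, parikhMatrix u.reverse := by
    rw [circParikh, conjClass_reverse,
      Finset.card_image_of_injective _ List.reverse_injective,
      Finset.sum_image (fun x _ y _ h => List.reverse_injective h)]
  rw [circParikh, hrev, altMatrix_smul, altMatrix_sum, Matrix.smul_mul, Matrix.mul_smul,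
    smul_smul, double_sum_eq, smul_smul]
  have : ((conjClass w).card : ℚ)⁻¹ * ((conjClass w).card : ℚ)⁻¹ *
      (((conjClass w).card : ℚ) * ((conjClass w).card : ℚ)) = 1 := by
    field_simp
  rw [this, one_smul]
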